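/- Let a K4-vector with members {A_{i_1}, A_{i_2}, A_{i_3}, B_j} not saturate the (m,n) toric inequality (so the g-function of the A-triple is {1,1,1}). Adjoin any non-member region with bond weight 2 to form a 5-armed star with weights {2,1,1,1,1}. Then the resulting entropy vector saturates the toric inequality. -/

import Mathlib

lemma castinj {k : ℕ} [NeZero k] {d e : ℕ} (hd : d < k) (he : e < k)
    (h : (d : ZMod k) = (e : ZMod k)) : d = e := by
  have h2 := congrArg ZMod.val h
  rwa [ZMod.val_cast_of_lt hd, ZMod.val_cast_of_lt he] at h2

-- exactly one direction
lemma fwd_total {k c : ℕ} [NeZero k] (hk : k = 2*c+1) {p q : ZMod k} (h : p ≠ q) :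
    (∃ d, d ∈ Finset.Icc 1 c ∧ q = p + (d : ZMod k))
      ∨ (∃ d, d ∈ Finset.Icc 1 c ∧ p = q + (d : ZMod k)) := by
  set v := (q - p).val with hv
  have hv0 : v ≠ 0 := by
    simp only [hv, ne_eq, ZMod.val_eq_zero, sub_eq_zero]
    exact fun hh => h hh.symm
  have hvk : v < k := ZMod.val_lt _
  have hcast : ((v : ℕ) : ZMod k) = q - p := ZMod.natCast_val _ |>.trans (ZMod.cast_id _ _)
  by_cases hvc : v ≤ c
  · left
    exact ⟨v, Finset.mem_Icc.2 ⟨by omega, hvc⟩, by rw [hcast]; ring⟩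
  · right
    refine ⟨k - v, Finset.mem_Icc.2 ⟨by omega, by omega⟩, ?_⟩
    have : ((k - v : ℕ) : ZMod k) = -(q - p) := by
      push_cast [Nat.cast_sub (le_of_lt hvk)]
      rw [hcast, ZMod.natCast_self]
      ring
    rw [this]; ring

lemma fwd_asymm {k c : ℕ} [NeZero k] (hk : k = 2*c+1) {p q : ZMod k}
    (h1 : ∃ d, d ∈ Finset.Icc 1 c ∧ q = p + (d : ZMod k))
    (h2 : ∃ d, d ∈ Finset.Icc 1 c ∧ p = q + (d : ZMod k)) : False := by
  obtain ⟨d, hd, hdq⟩ := h1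
  obtain ⟨e, he, hep⟩ := h2
  rw [Finset.mem_Icc] at hd he
  have : ((d + e : ℕ) : ZMod k) = 0 := by
    push_cast
    rw [hdq] at hep
    linear_combination -hep
  have hdvd := (ZMod.natCast_eq_zero_iff _ _).1 this
  have := Nat.le_of_dvd (by omega) hdvd
  omega

-- reindex back-arc: (x - c) + d = y for d < c  ↔  x = y + e for e ∈ [1,c]
lemma back_arc {k c : ℕ} [NeZero k] (hk : k = 2*c+1) (x y : ZMod k) :
    (∃ d < c, (x - (c : ZMod k)) + (d : ZMod k) = y)
      ↔ (∃ e, e ∈ Finset.Icc 1 c ∧ x = y + (e : ZMod k)) := by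
  constructor
  · rintro ⟨d, hd, hdy⟩
    refine ⟨c - d, Finset.mem_Icc.2 ⟨by omega, by omega⟩, ?_⟩
    rw [Nat.cast_sub (le_of_lt hd), ← hdy]
    push_cast
    ring
  · rintro ⟨e, he, hey⟩
    rw [Finset.mem_Icc] at he
    refine ⟨c - e, by omega, ?_⟩
    rw [Nat.cast_sub he.2, hey]; ring

-- three points can't all sit in a half-open arc x + [1,c] if each column of g has ≤ 1
lemma no_three {k c : ℕ} [NeZero k] (hk : k = 2*c+1) (a : Fin 3 → ZMod k)
    (ha : Function.Injective a)
    (hcol : ∀ t s1 s2 : Fin 3, s1 ≠ s2 →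
      (∃ d, d ∈ Finset.Icc 1 c ∧ a s1 = a t + (d : ZMod k)) →
      (∃ d, d ∈ Finset.Icc 1 c ∧ a s2 = a t + (d : ZMod k)) → False)
    (x : ZMod k) (e : Fin 3 → ℕ)
    (he : ∀ s, 1 ≤ e s ∧ e s ≤ c ∧ a s = x + (e s : ZMod k)) : False := by
  have hkpos : 0 < k := Nat.pos_of_ne_zero (NeZero.ne k)
  have heinj : Function.Injective e := by
    intro s1 s2 h12
    apply ha
    rw [(he s1).2.2, (he s2).2.2, h12]
  -- helper: if e s1 < e s2 then a s2 is in forward arc of a s1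
  have hfwd : ∀ s1 s2 : Fin 3, e s1 < e s2 →
      (∃ d, d ∈ Finset.Icc 1 c ∧ a s2 = a s1 + (d : ZMod k)) := by
    intro s1 s2 hlt
    refine ⟨e s2 - e s1, Finset.mem_Icc.2 ⟨by omega, by have := (he s2).2.1; omega⟩, ?_⟩
    rw [Nat.cast_sub (le_of_lt hlt), (he s1).2.2, (he s2).2.2]
    ring
  -- pick argmin
  obtain ⟨p, -, hp⟩ := Finset.exists_min_image Finset.univ e ⟨0, Finset.mem_univ 0⟩
  have hstrict : ∀ s, s ≠ p → e p < e s := by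
    intro s hs
    have h1 := hp s (Finset.mem_univ s)
    have h2 : e s ≠ e p := fun hh => hs (heinj hh)
    omega
  -- two others distinct from p
  obtain ⟨s1, s2, hs1, hs2, h12⟩ : ∃ s1 s2 : Fin 3, s1 ≠ p ∧ s2 ≠ p ∧ s1 ≠ s2 := by
    fin_cases p
    · exact ⟨1, 2, by decide, by decide, by decide⟩
    · exact ⟨0, 2, by decide, by decide, by decide⟩
    · exact ⟨0, 1, by decide, by decide, by decide⟩
  exact hcol p s1 s2 h12 (hfwd p s1 (hstrict s1 hs1)) (hfwd p s2 (hstrict s2 hs2))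




-- generic: turn double-sum identity into sum of differences


lemma sum_seg {k : ℕ} [NeZero k] {α : Type*} [AddCommMonoid α] (i : ZMod k) {c : ℕ}
    (hc : c ≤ k) (f : ZMod k → α) :
    ∑ x ∈ (Finset.range c).image (fun d : ℕ => i + (d : ZMod k)), f x
      = ∑ d ∈ Finset.range c, f (i + (d : ZMod k)) := by
  rw [Finset.sum_image]
  intro x hx y hy hxy
  simp only [Finset.mem_coe, Finset.coe_range, Set.mem_Iio, Finset.mem_range] at hx hy
  exact castinj (lt_of_lt_of_le hx hc) (lt_of_lt_of_le hy hc) (add_left_cancel hxy)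

lemma ind_sum {k : ℕ} [NeZero k] (i p : ZMod k) {c : ℕ} (hc : c ≤ k) :
    ∑ d ∈ Finset.range c, (if i + (d : ZMod k) = p then 1 else 0)
      = if ∃ d < c, i + (d : ZMod k) = p then 1 else 0 := by
  have hcard : ((Finset.range c).filter (fun d : ℕ => i + (d : ZMod k) = p)).card ≤ 1 := by
    apply Finset.card_le_one.2
    intro x hx y hy
    simp only [Finset.mem_filter, Finset.mem_range] at hx hy
    exact castinj (lt_of_lt_of_le hx.1 hc) (lt_of_lt_of_le hy.1 hc)
      (add_left_cancel (hx.2.trans hy.2.symm))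
  rw [Finset.sum_boole, Nat.cast_id]
  by_cases h : ∃ d < c, i + (d : ZMod k) = p
  · rw [if_pos h]
    obtain ⟨d, hd, hdp⟩ := h
    have hmem : d ∈ (Finset.range c).filter (fun d : ℕ => i + (d : ZMod k) = p) := by
      simp [Finset.mem_filter, Finset.mem_range, hd, hdp]
    have := Finset.card_pos.2 ⟨d, hmem⟩
    omega
  · rw [if_neg h, Finset.card_eq_zero.2]
    ext d
    simp only [Finset.mem_filter, Finset.mem_range, Finset.notMem_empty, iff_false, not_and]
    intro hd hdp
    exact h ⟨d, hd, hdp⟩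

lemma circle_count {k : ℕ} [NeZero k] (p : ZMod k) {c : ℕ} (hc : c ≤ k) :
    ∑ j : ZMod k, (if ∃ d < c, j + (d : ZMod k) = p then 1 else 0) = c := by
  have hset : (Finset.univ.filter (fun j : ZMod k => ∃ d < c, j + (d : ZMod k) = p))
      = (Finset.range c).image (fun d : ℕ => p - (d : ZMod k)) := by
    ext j
    simp only [Finset.mem_filter, Finset.mem_univ, true_and, Finset.mem_image,
      Finset.mem_range]
    constructor
    · rintro ⟨d, hd, hdp⟩; exact ⟨d, hd, by rw [← hdp]; ring⟩
    · rintro ⟨d, hd, hdp⟩; exact ⟨d, hd, by rw [← hdp]; ring⟩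
  rw [Finset.sum_boole, Nat.cast_id, hset,
    Finset.card_image_of_injOn, Finset.card_range]
  intro x hx y hy hxy
  simp only [Finset.mem_coe, Finset.mem_range] at hx hy
  have hxy' : (x : ZMod k) = y := by
    have : p - (x : ZMod k) = p - y := hxy
    linear_combination -this
  exact castinj (lt_of_lt_of_le hx hc) (lt_of_lt_of_le hy hc) hxy'

lemma sum_diff_form {m : ℕ} [NeZero m] {n : ℕ} [NeZero n]
    (B Sm : ZMod m → ZMod n → ℚ) (C : ℚ)
    (h : ∑ i : ZMod m, (∑ j : ZMod n, B i j - ∑ j : ZMod n, Sm i j) = C) :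
    ∑ i : ZMod m, ∑ j : ZMod n, B i j = (∑ i : ZMod m, ∑ j : ZMod n, Sm i j) + C := by
  rw [← h, Finset.sum_sub_distrib]
  ring

lemma caseB_main {m n c c' : ℕ} [NeZero m] [NeZero n]
    (hm : m = 2*c+1) (hn : n = 2*c'+1)
    (a : Fin 3 → ZMod m) (ha : Function.Injective a)
    (SA uA : ZMod m → ℕ) (SB E F : ZMod n → ℕ)
    (hE : ∀ j, E j ≤ 1) (hF : ∀ j, F j ≤ 1)
    (hSB : ∀ j, SB j = E j + 2 * F j)
    (hFsum : ∑ j : ZMod n, F j = c')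
    (huA0 : ∀ i : ZMod m, (∀ t, i ≠ a t - (c : ZMod m)) → uA i = 0)
    (huA1 : ∀ t, uA (a t - (c : ZMod m)) = 1)
    (hSA : ∀ t, SA (a t - (c : ZMod m)) = 1) :
    ∑ i : ZMod m, ∑ j : ZMod n,
        ((min (SA i + uA i + SB j) (6 - (SA i + uA i + SB j)) : ℕ) : ℚ)
      = (∑ i : ZMod m, ∑ j : ZMod n,
          ((min (SA i + SB j) (6 - (SA i + SB j)) : ℕ) : ℚ)) + 3 := by
  apply sum_diff_form
  set spec : Finset (ZMod m) := Finset.univ.image (fun t => a t - (c : ZMod m)) with hspec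
  have hsub : ∑ i : ZMod m,
      ((∑ j : ZMod n, ((min (SA i + uA i + SB j) (6 - (SA i + uA i + SB j)) : ℕ) : ℚ))
        - ∑ j : ZMod n, ((min (SA i + SB j) (6 - (SA i + SB j)) : ℕ) : ℚ))
      = ∑ i ∈ spec,
      ((∑ j : ZMod n, ((min (SA i + uA i + SB j) (6 - (SA i + uA i + SB j)) : ℕ) : ℚ))
        - ∑ j : ZMod n, ((min (SA i + SB j) (6 - (SA i + SB j)) : ℕ) : ℚ)) := by
    symm
    apply Finset.sum_subset (Finset.subset_univ _)
    intro i _ hi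
    have h0 : uA i = 0 := by
      apply huA0
      intro t ht
      exact hi (Finset.mem_image.2 ⟨t, Finset.mem_univ t, ht.symm⟩)
    rw [h0]
    simp
  rw [hsub, hspec, Finset.sum_image (by
    intro x _ y _ hxy
    exact ha (by linear_combination (norm := (push_cast; ring_nf)) hxy))]
  have hterm : ∀ t : Fin 3,
      ((∑ j : ZMod n, ((min (SA (a t - (c : ZMod m)) + uA (a t - (c : ZMod m)) + SB j)
            (6 - (SA (a t - (c : ZMod m)) + uA (a t - (c : ZMod m)) + SB j)) : ℕ) : ℚ))
        - ∑ j : ZMod n, ((min (SA (a t - (c : ZMod m)) + SB j)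
            (6 - (SA (a t - (c : ZMod m)) + SB j)) : ℕ) : ℚ)) = 1 := by
    intro t
    rw [hSA t, huA1 t]
    have hnat : ∑ j : ZMod n, min (1 + 1 + SB j) (6 - (1 + 1 + SB j))
        = (∑ j : ZMod n, min (1 + SB j) (6 - (1 + SB j))) + 1 := by
      have hcong : ∑ j : ZMod n, (min (1 + 1 + SB j) (6 - (1 + 1 + SB j)) + 2 * F j)
          = ∑ j : ZMod n, (min (1 + SB j) (6 - (1 + SB j)) + 1) := by
        apply Finset.sum_congr rfl
        intro j _
        have h1 := hE j
        have h2 := hF j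
        rw [hSB j]
        omega
      rw [Finset.sum_add_distrib, Finset.sum_add_distrib, ← Finset.mul_sum, hFsum,
        Finset.sum_const, Finset.card_univ, ZMod.card, smul_eq_mul, mul_one] at hcong
      omega
    rw [← Nat.cast_sum, ← Nat.cast_sum, hnat]
    push_cast
    ring
  rw [Finset.sum_congr rfl (fun t _ => hterm t)]
  simp [Fin.sum_univ_three]

lemma caseA_main {m n c c' : ℕ} [NeZero m] [NeZero n]
    (hm : m = 2*c+1) (hn : n = 2*c'+1)
    (a : Fin 3 → ZMod m) (ha : Function.Injective a)
    (rA : ZMod m) (hra : ∀ t, rA ≠ a t)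
    (SA uA : ZMod m → ℕ) (SB : ZMod n → ℕ)
    (hE : ∀ j, SB j ≤ 1)
    (hEsum : ∑ j : ZMod n, SB j = c')
    (hA : Fin 3 → ℕ) (hAle : ∀ t, hA t ≤ 1)
    (hf : 1 ≤ hA 0 + hA 1 + hA 2 ∧ hA 0 + hA 1 + hA 2 ≤ 2)
    (huA0 : ∀ i : ZMod m, (∀ t, i ≠ a t - (c : ZMod m)) → i ≠ rA - (c : ZMod m) → uA i = 0)
    (huA1 : ∀ t, uA (a t - (c : ZMod m)) = 1)
    (huA2 : uA (rA - (c : ZMod m)) = 2)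
    (hSA1 : ∀ t, SA (a t - (c : ZMod m)) = 1 + 2 * hA t)
    (hSA2 : SA (rA - (c : ZMod m)) = 3 - (hA 0 + hA 1 + hA 2)) :
    ∑ i : ZMod m, ∑ j : ZMod n,
        ((min (SA i + uA i + SB j) (6 - (SA i + uA i + SB j)) : ℕ) : ℚ)
      = (∑ i : ZMod m, ∑ j : ZMod n,
          ((min (SA i + SB j) (6 - (SA i + SB j)) : ℕ) : ℚ)) + 1 := by
  apply sum_diff_form
  set D : ZMod m → ℚ := fun i =>
      ((∑ j : ZMod n, ((min (SA i + uA i + SB j) (6 - (SA i + uA i + SB j)) : ℕ) : ℚ))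
        - ∑ j : ZMod n, ((min (SA i + SB j) (6 - (SA i + SB j)) : ℕ) : ℚ)) with hD
  show ∑ i : ZMod m, D i = 1
  set spec : Finset (ZMod m) :=
    insert (rA - (c : ZMod m)) (Finset.univ.image (fun t => a t - (c : ZMod m))) with hspec
  have hsub : ∑ i : ZMod m, D i = ∑ i ∈ spec, D i := by
    symm
    apply Finset.sum_subset (Finset.subset_univ _)
    intro i _ hi
    simp only [hspec, Finset.mem_insert, Finset.mem_image, Finset.mem_univ, true_and,
      not_or, not_exists] at hi
    have h0 : uA i = 0 := huA0 i (fun t ht => hi.2 t ht.symm) hi.1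
    simp only [hD, h0, Nat.add_zero, add_zero, sub_self]
  have hnotmem : rA - (c : ZMod m) ∉ Finset.univ.image (fun t => a t - (c : ZMod m)) := by
    simp only [Finset.mem_image, Finset.mem_univ, true_and, not_exists]
    intro t ht
    exact hra t (by linear_combination -ht)
  rw [hsub, hspec, Finset.sum_insert hnotmem, Finset.sum_image (by
    intro x _ y _ hxy
    exact ha (by linear_combination (norm := (push_cast; ring_nf)) hxy))]
  -- per-t terms
  have hterm : ∀ t : Fin 3, D (a t - (c : ZMod m)) = (1 - 2 * (hA t : ℚ)) * n := by
    intro t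
    simp only [hD]
    rcases Nat.le_one_iff_eq_zero_or_eq_one.1 (hAle t) with h | h
    · -- SA = 1, u = 1 : big = small + n
      have hsa : SA (a t - (c : ZMod m)) = 1 := by rw [hSA1 t, h]
      rw [hsa, huA1 t, h]
      have hnat : ∑ j : ZMod n, min (1 + 1 + SB j) (6 - (1 + 1 + SB j))
          = (∑ j : ZMod n, min (1 + SB j) (6 - (1 + SB j))) + n := by
        have hcong : ∑ j : ZMod n, min (1 + 1 + SB j) (6 - (1 + 1 + SB j))
            = ∑ j : ZMod n, (min (1 + SB j) (6 - (1 + SB j)) + 1) := by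
          apply Finset.sum_congr rfl
          intro j _
          have h1 := hE j
          omega
        rw [hcong, Finset.sum_add_distrib, Finset.sum_const, Finset.card_univ, ZMod.card,
          smul_eq_mul, mul_one]
      rw [← Nat.cast_sum, ← Nat.cast_sum, hnat]
      push_cast
      ring
    · -- SA = 3, u = 1 : big + n = small
      have hsa : SA (a t - (c : ZMod m)) = 3 := by rw [hSA1 t, h]
      rw [hsa, huA1 t, h]
      have hnat : (∑ j : ZMod n, min (3 + 1 + SB j) (6 - (3 + 1 + SB j))) + n
          = ∑ j : ZMod n, min (3 + SB j) (6 - (3 + SB j)) := by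
        have hcong : ∑ j : ZMod n, (min (3 + 1 + SB j) (6 - (3 + 1 + SB j)) + 1)
            = ∑ j : ZMod n, min (3 + SB j) (6 - (3 + SB j)) := by
          apply Finset.sum_congr rfl
          intro j _
          have h1 := hE j
          omega
        rw [Finset.sum_add_distrib, Finset.sum_const, Finset.card_univ, ZMod.card,
          smul_eq_mul, mul_one] at hcong
        omega
      have := congrArg (fun x : ℕ => (x : ℚ)) hnat
      push_cast at this ⊢
      linarith
  rw [Fin.sum_univ_three, hterm 0, hterm 1, hterm 2]
  -- the rA term
  have hfcase : hA 0 + hA 1 + hA 2 = 1 ∨ hA 0 + hA 1 + hA 2 = 2 := by omega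
  rcases hfcase with hfv | hfv
  · -- SA = 2, u = 2 : big + 2c' = small
    have hD4 : D (rA - (c : ZMod m)) = -(2 * (c' : ℚ)) := by
      simp only [hD]
      have hsa : SA (rA - (c : ZMod m)) = 2 := by rw [hSA2, hfv]
      rw [hsa, huA2]
      have hnat : (∑ j : ZMod n, min (2 + 2 + SB j) (6 - (2 + 2 + SB j))) + 2 * c'
          = ∑ j : ZMod n, min (2 + SB j) (6 - (2 + SB j)) := by
        have hcong : ∑ j : ZMod n, (min (2 + 2 + SB j) (6 - (2 + 2 + SB j)) + 2 * SB j)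
            = ∑ j : ZMod n, min (2 + SB j) (6 - (2 + SB j)) := by
          apply Finset.sum_congr rfl
          intro j _
          have h1 := hE j
          omega
        rw [Finset.sum_add_distrib, ← Finset.mul_sum, hEsum] at hcong
        exact hcong
      have := congrArg (fun x : ℕ => (x : ℚ)) hnat
      push_cast at this ⊢
      linarith
    rw [hD4]
    have h01 : (hA 0 : ℚ) + hA 1 + hA 2 = 1 := by exact_mod_cast congrArg (fun x : ℕ => (x:ℚ)) hfv
    have hnq : (n : ℚ) = 2 * c' + 1 := by exact_mod_cast congrArg (fun x : ℕ => (x:ℚ)) hn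
    nlinarith [h01, hnq]
  · -- SA = 1, u = 2 : big + 2c' = small + 2n
    have hD4 : D (rA - (c : ZMod m)) = 2 * (n : ℚ) - 2 * c' := by
      simp only [hD]
      have hsa : SA (rA - (c : ZMod m)) = 1 := by rw [hSA2, hfv]
      rw [hsa, huA2]
      have hnat : (∑ j : ZMod n, min (1 + 2 + SB j) (6 - (1 + 2 + SB j))) + 2 * c'
          = (∑ j : ZMod n, min (1 + SB j) (6 - (1 + SB j))) + 2 * n := by
        have hcong : ∑ j : ZMod n, (min (1 + 2 + SB j) (6 - (1 + 2 + SB j)) + 2 * SB j)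
            = ∑ j : ZMod n, (min (1 + SB j) (6 - (1 + SB j)) + 2) := by
          apply Finset.sum_congr rfl
          intro j _
          have h1 := hE j
          omega
        rw [Finset.sum_add_distrib, ← Finset.mul_sum, hEsum, Finset.sum_add_distrib,
          Finset.sum_const, Finset.card_univ, ZMod.card, smul_eq_mul] at hcong
        omega
      have := congrArg (fun x : ℕ => (x : ℚ)) hnat
      push_cast at this ⊢
      linarith
    rw [hD4]
    have h01 : (hA 0 : ℚ) + hA 1 + hA 2 = 2 := by exact_mod_cast congrArg (fun x : ℕ => (x:ℚ)) hfv
    have hnq : (n : ℚ) = 2 * c' + 1 := by exact_mod_cast congrArg (fun x : ℕ => (x:ℚ)) hn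
    nlinarith [h01, hnq]


/-- The union of `c` consecutively indexed `A`-regions starting at `A_i`. -/
def ASeg (m n : ℕ) [NeZero m] [NeZero n] (i : ZMod m) (c : ℕ) :
    Finset (ZMod m ⊕ ZMod n) :=
  (Finset.range c).image (fun d : ℕ => Sum.inl (i + (d : ZMod m)))

/-- The union of `c` consecutively indexed `B`-regions starting at `B_j`. -/
def BSeg (m n : ℕ) [NeZero m] [NeZero n] (j : ZMod n) (c : ℕ) :
    Finset (ZMod m ⊕ ZMod n) :=
  (Finset.range c).image (fun d : ℕ => Sum.inr (j + (d : ZMod n)))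

/-- Let a K4-vector with members `A_{i₁}, A_{i₂}, A_{i₃}, B_j` fail to saturate the
`(m,n)` toric inequality, i.e. the counting function `g` of the `A`-triple is
`{1,1,1}`.  Adjoin any non-member region `r` with bond weight `2`, forming a
5-armed star graph with weights `{2,1,1,1,1}` and min-cut entropies
`S X = min(w(X), w(Xᶜ))`.  Then the resulting entropy vector saturates the toric
inequality. -/
theorem stmt_13 (m n : ℕ) [NeZero m] [NeZero n] (hm : Odd m) (hn : Odd n)
    (a : Fin 3 → ZMod m) (ha : Function.Injective a)
    (hg : ∀ t : Fin 3, (Finset.univ.filter (fun s : Fin 3 =>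
        a s ∈ (Finset.Icc 1 ((m-1)/2)).image (fun d : ℕ => a t + (d : ZMod m)))).card = 1)
    (jB : ZMod n)
    (r : ZMod m ⊕ ZMod n)
    (hrA : ∀ t, r ≠ Sum.inl (a t)) (hrB : r ≠ Sum.inr jB)
    (w : (ZMod m ⊕ ZMod n) → ℕ)
    (hw : ∀ x, w x = if x = r then 2
        else if (∃ t : Fin 3, x = Sum.inl (a t)) ∨ x = Sum.inr jB then 1 else 0)
    (S : Finset (ZMod m ⊕ ZMod n) → ℚ)
    (hS : ∀ X, S X = ((min (∑ x ∈ X, w x) (∑ x ∈ Xᶜ, w x) : ℕ) : ℚ)) :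
    (∑ i : ZMod m, ∑ j : ZMod n, S (ASeg m n i ((m+1)/2) ∪ BSeg m n j ((n-1)/2)))
      = (∑ i : ZMod m, ∑ j : ZMod n, S (ASeg m n i ((m-1)/2) ∪ BSeg m n j ((n-1)/2)))
        + S (Finset.univ.image Sum.inl) := by
  obtain ⟨c, hmc⟩ : ∃ c, m = 2*c+1 := by obtain ⟨k, hk⟩ := hm; exact ⟨k, by omega⟩
  obtain ⟨c', hnc⟩ : ∃ c', n = 2*c'+1 := by obtain ⟨k, hk⟩ := hn; exact ⟨k, by omega⟩
  have hm2 : (m+1)/2 = c+1 := by omega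
  have hm1 : (m-1)/2 = c := by omega
  have hn1 : (n-1)/2 = c' := by omega
  rw [hm2, hm1, hn1]
  rw [hm1] at hg
  -- pointwise weight formula
  have hw5 : ∀ x, w x = (if x = r then 2 else 0)
      + ((if x = Sum.inl (a 0) then 1 else 0) + (if x = Sum.inl (a 1) then 1 else 0)
        + (if x = Sum.inl (a 2) then 1 else 0))
      + (if x = Sum.inr jB then 1 else 0) := by
    intro x
    rw [hw x]
    by_cases hr : x = r
    · subst hr
      simp [(hrA 0).symm, (hrA 1).symm, (hrA 2).symm, hrB,
        fun t => (hrA t), fun t => (hrA t).symm]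
    · rw [if_neg hr]
      by_cases hex : (∃ t : Fin 3, x = Sum.inl (a t)) ∨ x = Sum.inr jB
      · rw [if_pos hex]
        rcases hex with ⟨t, ht⟩ | hb
        · subst ht
          rw [if_neg hr]
          simp only [Sum.inl.injEq, reduceCtorEq, if_false, ha.eq_iff]
          fin_cases t <;> simp
        · subst hb
          simp [hr]
      · rw [if_neg hex]
        push_neg at hex
        have h0 : x ≠ Sum.inl (a 0) := hex.1 0
        have h1 : x ≠ Sum.inl (a 1) := hex.1 1
        have h2 : x ≠ Sum.inl (a 2) := hex.1 2
        simp [hr, h0, h1, h2, hex.2]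
  have htot : ∑ x : ZMod m ⊕ ZMod n, w x = 6 := by
    rw [Finset.sum_congr rfl (fun x _ => hw5 x)]
    simp [Finset.sum_add_distrib, Finset.sum_ite_eq' Finset.univ]
  have hcompl : ∀ X : Finset (ZMod m ⊕ ZMod n), ∑ x ∈ Xᶜ, w x = 6 - ∑ x ∈ X, w x := by
    intro X
    have h1 := Finset.sum_add_sum_compl X w
    omega
  have hle : ∀ X : Finset (ZMod m ⊕ ZMod n), ∑ x ∈ X, w x ≤ 6 := by
    intro X
    have h1 := Finset.sum_add_sum_compl X w
    omega
  have hS6 : ∀ X, S X = ((min (∑ x ∈ X, w x) (6 - ∑ x ∈ X, w x) : ℕ) : ℚ) := by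
    intro X
    rw [hS, hcompl]
  -- disjointness and union sums
  have hdisj : ∀ (i : ZMod m) (j : ZMod n) (c₀ c₁ : ℕ),
      Disjoint (ASeg m n i c₀) (BSeg m n j c₁) := by
    intro i j c₀ c₁
    rw [Finset.disjoint_left]
    intro x hx hy
    simp only [ASeg, BSeg, Finset.mem_image] at hx hy
    obtain ⟨d, -, hd⟩ := hx
    obtain ⟨e, -, he⟩ := hy
    rw [← hd] at he
    exact Sum.inr_ne_inl he
  have hseg : ∀ (i : ZMod m) (c₀ : ℕ), c₀ ≤ m →
      ∑ x ∈ ASeg m n i c₀, w x = ∑ d ∈ Finset.range c₀, w (Sum.inl (i + (d : ZMod m))) := by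
    intro i c₀ hc₀
    rw [ASeg, Finset.sum_image]
    intro x hx y hy hxy
    simp only [Finset.mem_coe, Finset.coe_range, Set.mem_Iio, Finset.mem_range] at hx hy
    exact castinj (lt_of_lt_of_le hx hc₀) (lt_of_lt_of_le hy hc₀)
      (add_left_cancel (Sum.inl_injective hxy))
  have hsegB : ∀ (j : ZMod n) (c₁ : ℕ), c₁ ≤ n →
      ∑ x ∈ BSeg m n j c₁, w x = ∑ d ∈ Finset.range c₁, w (Sum.inr (j + (d : ZMod n))) := by
    intro j c₁ hc₁
    rw [BSeg, Finset.sum_image]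
    intro x hx y hy hxy
    simp only [Finset.mem_coe, Finset.coe_range, Set.mem_Iio, Finset.mem_range] at hx hy
    exact castinj (lt_of_lt_of_le hx hc₁) (lt_of_lt_of_le hy hc₁)
      (add_left_cancel (Sum.inr_injective hxy))
  have hunion : ∀ (i : ZMod m) (j : ZMod n) (c₀ c₁ : ℕ), c₀ ≤ m → c₁ ≤ n →
      ∑ x ∈ (ASeg m n i c₀ ∪ BSeg m n j c₁), w x
        = (∑ d ∈ Finset.range c₀, w (Sum.inl (i + (d : ZMod m))))
          + ∑ d ∈ Finset.range c₁, w (Sum.inr (j + (d : ZMod n))) := by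
    intro i j c₀ c₁ h₀ h₁
    rw [Finset.sum_union (hdisj i j c₀ c₁), hseg i c₀ h₀, hsegB j c₁ h₁]
  -- abbreviations
  set SA : ZMod m → ℕ := fun i => ∑ d ∈ Finset.range c, w (Sum.inl (i + (d : ZMod m)))
    with hSA
  set uA : ZMod m → ℕ := fun i => w (Sum.inl (i + (c : ZMod m))) with huA
  set SB : ZMod n → ℕ := fun j => ∑ d ∈ Finset.range c', w (Sum.inr (j + (d : ZMod n)))
    with hSB
  have hbigW : ∀ (i : ZMod m) (j : ZMod n),
      ∑ x ∈ (ASeg m n i (c+1) ∪ BSeg m n j c'), w x = SA i + uA i + SB j := by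
    intro i j
    rw [hunion i j (c+1) c' (by omega) (by omega), Finset.sum_range_succ]
  have hsmallW : ∀ (i : ZMod m) (j : ZMod n),
      ∑ x ∈ (ASeg m n i c ∪ BSeg m n j c'), w x = SA i + SB j := by
    intro i j
    rw [hunion i j c c' (by omega) (by omega)]
  have hAW : ∑ x ∈ (Finset.univ.image Sum.inl : Finset (ZMod m ⊕ ZMod n)), w x
      = ∑ p : ZMod m, w (Sum.inl p) := by
    rw [Finset.sum_image]
    intro x _ y _ hxy
    exact Sum.inl_injective hxy
  have hgoal1 : ∀ (i : ZMod m) (j : ZMod n),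
      S (ASeg m n i (c+1) ∪ BSeg m n j c')
        = ((min (SA i + uA i + SB j) (6 - (SA i + uA i + SB j)) : ℕ) : ℚ) := by
    intro i j
    rw [hS6, hbigW]
  have hgoal2 : ∀ (i : ZMod m) (j : ZMod n),
      S (ASeg m n i c ∪ BSeg m n j c')
        = ((min (SA i + SB j) (6 - (SA i + SB j)) : ℕ) : ℚ) := by
    intro i j
    rw [hS6, hsmallW]
  simp only [hgoal1, hgoal2]
  rw [hS6, hAW]
  -- bridge: membership in image vs existential
  have hGiff : ∀ (x y : ZMod m), (x ∈ (Finset.Icc 1 c).image (fun d : ℕ => y + (d : ZMod m)))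
      ↔ (∃ e, e ∈ Finset.Icc 1 c ∧ y + (e : ZMod m) = x) := by
    intro x y
    simp [Finset.mem_image]
  -- g indicator facts
  set gi : Fin 3 → Fin 3 → ℕ := fun s t =>
    if a s ∈ (Finset.Icc 1 c).image (fun d : ℕ => a t + (d : ZMod m)) then 1 else 0 with hgi
  have hcol3 : ∀ t, gi 0 t + gi 1 t + gi 2 t = 1 := by
    intro t
    have h1 := hg t
    rw [Finset.card_filter, Fin.sum_univ_three] at h1
    exact h1
  have hgile : ∀ s t, gi s t ≤ 1 := by
    intro s t
    simp only [hgi]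
    split <;> omega
  have hdiag : ∀ t, gi t t = 0 := by
    intro t
    simp only [hgi]
    rw [if_neg]
    intro hmem
    obtain ⟨e, he, heq⟩ := (hGiff _ _).1 hmem
    rw [Finset.mem_Icc] at he
    have h0 : ((e : ℕ) : ZMod m) = 0 := by linear_combination heq
    have := (ZMod.natCast_eq_zero_iff _ _).1 h0
    have := Nat.le_of_dvd (by omega) this
    omega
  have hxorg : ∀ s t, s ≠ t → gi s t + gi t s = 1 := by
    intro s t hst
    have hne : a t ≠ a s := ha.ne (Ne.symm hst)
    simp only [hgi]
    rcases fwd_total hmc hne with ⟨d, hd, hq⟩ | ⟨d, hd, hq⟩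
    · rw [if_pos ((hGiff _ _).2 ⟨d, hd, hq.symm⟩), if_neg]
      intro hmem
      obtain ⟨e, he, hp⟩ := (hGiff _ _).1 hmem
      exact fwd_asymm hmc ⟨d, hd, hq⟩ ⟨e, he, hp.symm⟩
    · rw [if_neg, if_pos ((hGiff _ _).2 ⟨d, hd, hq.symm⟩)]
      intro hmem
      obtain ⟨e, he, hp⟩ := (hGiff _ _).1 hmem
      exact fwd_asymm hmc ⟨e, he, hp.symm⟩ ⟨d, hd, hq⟩
  have hrow3 : ∀ t, gi t 0 + gi t 1 + gi t 2 = 1 := by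
    intro t
    have h0 := hcol3 0; have h1 := hcol3 1; have h2 := hcol3 2
    have d0 := hdiag 0; have d1 := hdiag 1; have d2 := hdiag 2
    have x01 := hxorg 0 1 (by decide); have x02 := hxorg 0 2 (by decide)
    have x12 := hxorg 1 2 (by decide)
    have ht3 : t = 0 ∨ t = 1 ∨ t = 2 := by
      clear h0 h1 h2 d0 d1 d2 x01 x02 x12
      revert t; decide
    rcases ht3 with rfl | rfl | rfl <;> omega
  -- small generic facts reused below
  have hcm : c ≤ m := by omega
  have hcn : c' ≤ n := by omega
  have h3cases : ∀ s : Fin 3, s = 0 ∨ s = 1 ∨ s = 2 := by decide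
  have hcolP : ∀ (t s1 s2 : Fin 3), s1 ≠ s2 →
      (∃ d, d ∈ Finset.Icc 1 c ∧ a s1 = a t + (d : ZMod m)) →
      (∃ d, d ∈ Finset.Icc 1 c ∧ a s2 = a t + (d : ZMod m)) → False := by
    intro t s1 s2 h12 hx1 hx2
    obtain ⟨d1, hd1, he1⟩ := hx1
    obtain ⟨d2, hd2, he2⟩ := hx2
    have q1 : gi s1 t = 1 := by
      simp only [hgi]
      rw [if_pos ((hGiff _ _).2 ⟨d1, hd1, he1.symm⟩)]
    have q2 : gi s2 t = 1 := by
      simp only [hgi]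
      rw [if_pos ((hGiff _ _).2 ⟨d2, hd2, he2.symm⟩)]
    have hc := hcol3 t
    rcases h3cases s1 with rfl | rfl | rfl <;> rcases h3cases s2 with rfl | rfl | rfl <;>
      first
        | exact h12 rfl
        | omega
  -- arc-count key
  have key : ∀ (x y : ZMod m),
      (∑ d ∈ Finset.range c, if x - (c : ZMod m) + (d : ZMod m) = y then (1:ℕ) else 0)
        = if x ∈ (Finset.Icc 1 c).image (fun d : ℕ => y + (d : ZMod m)) then 1 else 0 := by
    intro x y
    rw [ind_sum _ _ hcm]
    apply if_congr _ rfl rfl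
    rw [back_arc hmc x y, hGiff]
    constructor
    · rintro ⟨e, he, hx⟩; exact ⟨e, he, hx.symm⟩
    · rintro ⟨e, he, hx⟩; exact ⟨e, he, hx.symm⟩
  have hself : ∀ (x : ZMod m),
      (if x ∈ (Finset.Icc 1 c).image (fun d : ℕ => x + (d : ZMod m)) then (1:ℕ) else 0) = 0 := by
    intro x
    rw [if_neg]
    intro hmem
    obtain ⟨e, he, heq⟩ := (hGiff _ _).1 hmem
    rw [Finset.mem_Icc] at he
    have h0 : ((e : ℕ) : ZMod m) = 0 := by linear_combination heq
    have := (ZMod.natCast_eq_zero_iff _ _).1 h0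
    have := Nat.le_of_dvd (by omega) this
    omega
  rcases r with rA | rB
  · -- Case A : the weight-2 region is an A-region
    have hraA : ∀ t, rA ≠ a t := by
      intro t h
      exact hrA t (by rw [h])
    set hAi : Fin 3 → ℕ := fun t =>
      if a t ∈ (Finset.Icc 1 c).image (fun d : ℕ => rA + (d : ZMod m)) then 1 else 0 with hhAi
    have hAle : ∀ t, hAi t ≤ 1 := by
      intro t; simp only [hhAi]; split <;> omega
    -- xor with reverse indicator
    have hAxor : ∀ t, hAi t
        + (if rA ∈ (Finset.Icc 1 c).image (fun d : ℕ => a t + (d : ZMod m)) then 1 else 0)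
        = 1 := by
      intro t
      simp only [hhAi]
      rcases fwd_total hmc (hraA t) with ⟨d, hd, hq⟩ | ⟨d, hd, hq⟩
      · rw [if_pos ((hGiff _ _).2 ⟨d, hd, hq.symm⟩), if_neg]
        intro hmem
        obtain ⟨e, he, hp⟩ := (hGiff _ _).1 hmem
        exact fwd_asymm hmc ⟨d, hd, hq⟩ ⟨e, he, hp.symm⟩
      · rw [if_neg, if_pos ((hGiff _ _).2 ⟨d, hd, hq.symm⟩)]
        · intro hmem
          obtain ⟨e, he, hp⟩ := (hGiff _ _).1 hmem
          exact fwd_asymm hmc ⟨e, he, hp.symm⟩ ⟨d, hd, hq⟩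
    -- bounds on f
    have hf1 : 1 ≤ hAi 0 + hAi 1 + hAi 2 := by
      by_contra hcon
      push_neg at hcon
      have hz : ∀ t, hAi t = 0 := by
        intro t
        have h0 := hAle 0; have h1 := hAle 1; have h2 := hAle 2
        rcases h3cases t with rfl | rfl | rfl <;> omega
      have hex : ∀ t : Fin 3, ∃ e, e ∈ Finset.Icc 1 c ∧ a t + (e : ZMod m) = rA := by
        intro t
        have := hAxor t
        rw [hz t] at this
        simp only [zero_add] at this
        by_contra hno
        rw [if_neg (fun hmem => hno ((hGiff _ _).1 hmem))] at this
        omega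
      choose ef hef1 hef2 using hex
      apply no_three hmc a ha hcolP (rA - ((c+1 : ℕ) : ZMod m)) (fun t => c + 1 - ef t)
      intro s
      have he := hef1 s
      rw [Finset.mem_Icc] at he
      refine ⟨by omega, by omega, ?_⟩
      rw [Nat.cast_sub (by omega)]
      push_cast
      linear_combination hef2 s
    have hf2 : hAi 0 + hAi 1 + hAi 2 ≤ 2 := by
      by_contra hcon
      push_neg at hcon
      have ho : ∀ t, hAi t = 1 := by
        intro t
        have h0 := hAle 0; have h1 := hAle 1; have h2 := hAle 2
        rcases h3cases t with rfl | rfl | rfl <;> omega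
      have hex : ∀ t : Fin 3, ∃ e, e ∈ Finset.Icc 1 c ∧ rA + (e : ZMod m) = a t := by
        intro t
        have := ho t
        simp only [hhAi] at this
        by_cases hmem : a t ∈ (Finset.Icc 1 c).image (fun d : ℕ => rA + (d : ZMod m))
        · exact (hGiff _ _).1 hmem
        · rw [if_neg hmem] at this; omega
      choose ef hef1 hef2 using hex
      apply no_three hmc a ha hcolP rA ef
      intro s
      have he := hef1 s
      rw [Finset.mem_Icc] at he
      exact ⟨he.1, he.2, (hef2 s).symm⟩
    -- pointwise weights
    have hvA : ∀ p : ZMod m, w (Sum.inl p)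
        = 2 * (if p = rA then 1 else 0)
          + ((if p = a 0 then 1 else 0) + (if p = a 1 then 1 else 0)
            + (if p = a 2 then 1 else 0)) := by
      intro p
      rw [hw5]
      simp only [Sum.inl.injEq, reduceCtorEq, if_false, add_zero]
      split_ifs <;> omega
    have hvB : ∀ q : ZMod n, w (Sum.inr q) = if q = jB then 1 else 0 := by
      intro q
      rw [hw5]
      simp only [Sum.inr.injEq, reduceCtorEq, if_false, zero_add, add_zero]
    -- SA at shifted points
    have hSAgen : ∀ x : ZMod m, SA (x - (c : ZMod m))
        = 2 * (if x ∈ (Finset.Icc 1 c).image (fun d : ℕ => rA + (d : ZMod m)) then 1 else 0)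
          + ((if x ∈ (Finset.Icc 1 c).image (fun d : ℕ => a 0 + (d : ZMod m)) then 1 else 0)
            + (if x ∈ (Finset.Icc 1 c).image (fun d : ℕ => a 1 + (d : ZMod m)) then 1 else 0)
            + (if x ∈ (Finset.Icc 1 c).image (fun d : ℕ => a 2 + (d : ZMod m)) then 1 else 0)) := by
      intro x
      simp only [hSA]
      rw [Finset.sum_congr rfl (fun (d : ℕ) _ => hvA (x - (c : ZMod m) + (d : ZMod m)))]
      rw [Finset.sum_add_distrib, Finset.sum_add_distrib, Finset.sum_add_distrib,
        ← Finset.mul_sum]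
      have k0 : ∀ y : ZMod m,
          (∑ d ∈ Finset.range c, if x - (c : ZMod m) + (d : ZMod m) = y then (1:ℕ) else 0)
          = if x ∈ (Finset.Icc 1 c).image (fun d : ℕ => y + (d : ZMod m)) then 1 else 0 :=
        fun y => key x y
      rw [k0 rA, k0 (a 0), k0 (a 1), k0 (a 2)]
    have hSA1A : ∀ t, SA (a t - (c : ZMod m)) = 1 + 2 * hAi t := by
      intro t
      have h1 : SA (a t - (c : ZMod m)) = 2 * hAi t + (gi t 0 + gi t 1 + gi t 2) :=
        hSAgen (a t)
      have h2 := hrow3 t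
      omega
    have hSA2A : SA (rA - (c : ZMod m)) = 3 - (hAi 0 + hAi 1 + hAi 2) := by
      have h1 := hSAgen rA
      rw [hself rA] at h1
      have x0 := hAxor 0; have x1 := hAxor 1; have x2 := hAxor 2
      omega
    -- uA values
    have huA1A : ∀ t, uA (a t - (c : ZMod m)) = 1 := by
      intro t
      have hx : a t - (c : ZMod m) + (c : ZMod m) = a t := by ring
      simp only [huA, hx]
      rw [hw]
      rw [if_neg (fun h => hrA t h.symm), if_pos (Or.inl ⟨t, rfl⟩)]
    have huA2A : uA (rA - (c : ZMod m)) = 2 := by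
      have hx : rA - (c : ZMod m) + (c : ZMod m) = rA := by ring
      simp only [huA, hx]
      rw [hw, if_pos rfl]
    have huA0A : ∀ i : ZMod m, (∀ t, i ≠ a t - (c : ZMod m)) → i ≠ rA - (c : ZMod m) →
        uA i = 0 := by
      intro i hit hir
      simp only [huA]
      rw [hvA]
      have h1 : i + (c : ZMod m) ≠ rA := by
        intro h; exact hir (by rw [← h]; ring)
      have h2 : ∀ t, i + (c : ZMod m) ≠ a t := by
        intro t h; exact hit t (by rw [← h]; ring)
      rw [if_neg h1, if_neg (h2 0), if_neg (h2 1), if_neg (h2 2)]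
    -- SB values
    have hSBE : ∀ j : ZMod n, SB j
        = if ∃ d < c', j + (d : ZMod n) = jB then 1 else 0 := by
      intro j
      simp only [hSB]
      rw [Finset.sum_congr rfl (fun (d : ℕ) _ => hvB (j + (d : ZMod n))), ind_sum _ _ hcn]
    have hE : ∀ j, SB j ≤ 1 := by
      intro j; rw [hSBE j]; split <;> omega
    have hEsum : ∑ j : ZMod n, SB j = c' := by
      rw [Finset.sum_congr rfl (fun j _ => hSBE j)]
      exact circle_count jB hcn
    -- total A-weight
    have hTA : ∑ p : ZMod m, w (Sum.inl p) = 5 := by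
      rw [Finset.sum_congr rfl (fun (p : ZMod m) _ => hvA p)]
      simp [Finset.sum_add_distrib, ← Finset.mul_sum, Finset.sum_ite_eq' Finset.univ]
    rw [hTA]
    have hconst : ((min 5 (6 - 5) : ℕ) : ℚ) = 1 := by norm_num
    rw [hconst]
    exact caseA_main hmc hnc a ha rA hraA SA uA SB hE hEsum hAi hAle ⟨hf1, hf2⟩
      huA0A huA1A huA2A hSA1A hSA2A
  · -- Case B : the weight-2 region is a B-region
    have hrbB : rB ≠ jB := by
      intro h; exact hrB (by rw [h])
    have hvA : ∀ p : ZMod m, w (Sum.inl p)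
        = (if p = a 0 then 1 else 0) + (if p = a 1 then 1 else 0)
          + (if p = a 2 then 1 else 0) := by
      intro p
      rw [hw5]
      simp only [Sum.inl.injEq, reduceCtorEq, if_false, zero_add, add_zero]
    have hvB : ∀ q : ZMod n, w (Sum.inr q)
        = (if q = jB then 1 else 0) + 2 * (if q = rB then 1 else 0) := by
      intro q
      rw [hw5]
      simp only [Sum.inr.injEq, reduceCtorEq, if_false, zero_add, add_zero]
      split_ifs <;> omega
    set E : ZMod n → ℕ := fun j =>
      ∑ d ∈ Finset.range c', if j + (d : ZMod n) = jB then 1 else 0 with hEdef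
    set F : ZMod n → ℕ := fun j =>
      ∑ d ∈ Finset.range c', if j + (d : ZMod n) = rB then 1 else 0 with hFdef
    have hSBEF : ∀ j, SB j = E j + 2 * F j := by
      intro j
      simp only [hSB, hEdef, hFdef]
      rw [Finset.sum_congr rfl (fun (d : ℕ) _ => hvB (j + (d : ZMod n))),
        Finset.sum_add_distrib, ← Finset.mul_sum]
    have hE1 : ∀ j, E j ≤ 1 := by
      intro j
      simp only [hEdef]
      rw [ind_sum _ _ hcn]
      split <;> omega
    have hF1 : ∀ j, F j ≤ 1 := by
      intro j
      simp only [hFdef]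
      rw [ind_sum _ _ hcn]
      split <;> omega
    have hFsum : ∑ j : ZMod n, F j = c' := by
      simp only [hFdef]
      rw [Finset.sum_congr rfl (fun j _ => ind_sum j rB hcn)]
      exact circle_count rB hcn
    have hSA1B : ∀ t, SA (a t - (c : ZMod m)) = 1 := by
      intro t
      have h1 : SA (a t - (c : ZMod m)) = gi t 0 + gi t 1 + gi t 2 := by
        simp only [hSA]
        rw [Finset.sum_congr rfl (fun (d : ℕ) _ => hvA (a t - (c : ZMod m) + (d : ZMod m)))]
        rw [Finset.sum_add_distrib, Finset.sum_add_distrib]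
        rw [key (a t) (a 0), key (a t) (a 1), key (a t) (a 2)]
      rw [h1, hrow3 t]
    have huA1B : ∀ t, uA (a t - (c : ZMod m)) = 1 := by
      intro t
      have hx : a t - (c : ZMod m) + (c : ZMod m) = a t := by ring
      simp only [huA, hx]
      rw [hw]
      rw [if_neg (fun h => hrA t h.symm), if_pos (Or.inl ⟨t, rfl⟩)]
    have huA0B : ∀ i : ZMod m, (∀ t, i ≠ a t - (c : ZMod m)) → uA i = 0 := by
      intro i hit
      simp only [huA]
      rw [hvA]
      have h2 : ∀ t, i + (c : ZMod m) ≠ a t := by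
        intro t h; exact hit t (by rw [← h]; ring)
      rw [if_neg (h2 0), if_neg (h2 1), if_neg (h2 2)]
    have hTA : ∑ p : ZMod m, w (Sum.inl p) = 3 := by
      rw [Finset.sum_congr rfl (fun (p : ZMod m) _ => hvA p)]
      simp [Finset.sum_add_distrib, Finset.sum_ite_eq' Finset.univ]
    rw [hTA]
    have hconst : ((min 3 (6 - 3) : ℕ) : ℚ) = 3 := by norm_num
    rw [hconst]
    have hmain := caseB_main hmc hnc a ha SA uA SB E F hE1 hF1 hSBEF hFsum huA0B huA1B hSA1B
    exact hmain
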